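/- Let f, g, h ∈ ℂ[X] with deg f ≥ 1, g ≠ 0 and deg g < deg f, and let w ∈ ℂ. If f(X + w)·g(X) = h(X)·f(X), then there exists λ ∈ ℂ with f(λ) = 0 and f(λ + w) = 0; that is, f has two roots differing by w. (Core of Proposition 11.1: applied to the indicial polynomial f of L at infinity and the remainder g of Q modulo L, it shows the string number n satisfies nN ≤ |λ_i − λ_j| for some pair of roots of the indicial equation.) -/

import Mathlib

open Polynomial

/-- Core of Proposition 11.1: if `f(X+w)·g(X) = h(X)·f(X)` with `deg f ≥ 1`, `g ≠ 0` and
`deg g < deg f`, then `f` has two roots differing by `w`. -/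
theorem indicial_roots_differ (f g h : Polynomial ℂ) (w : ℂ)
    (hf : 1 ≤ f.natDegree) (hg : g ≠ 0) (hdeg : g.natDegree < f.natDegree)
    (heq : f.comp (Polynomial.X + Polynomial.C w) * g = h * f) :
    ∃ l : ℂ, f.eval l = 0 ∧ f.eval (l + w) = 0 := by
  by_contra hc
  push_neg at hc
  have hf0 : f ≠ 0 := by
    intro h0; simp [h0] at hf
  have hcomp0 : f.comp (X + C w) ≠ 0 := by
    intro h0
    have := Polynomial.natDegree_comp (p := f) (q := X + C w)
    rw [h0] at this
    simp [Polynomial.natDegree_X_add_C] at this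
    omega
  have hh0 : h ≠ 0 := by
    intro h0
    rw [h0, zero_mul] at heq
    exact (mul_ne_zero hcomp0 hg) heq
  -- key: f.roots ≤ g.roots as multisets
  have hle : f.roots ≤ g.roots := by
    rw [Multiset.le_iff_count]
    intro a
    rw [Polynomial.count_roots, Polynomial.count_roots]
    by_cases ha : f.eval a = 0
    · have hcompa : (f.comp (X + C w)).rootMultiplicity a = 0 := by
        rw [Polynomial.rootMultiplicity_eq_zero_iff]
        intro hr
        exact absurd (by simpa using hr) (hc a ha)
      have h1 : (f.comp (X + C w) * g).rootMultiplicity a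
          = (h * f).rootMultiplicity a := by rw [heq]
      rw [Polynomial.rootMultiplicity_mul (mul_ne_zero hcomp0 hg),
        Polynomial.rootMultiplicity_mul (mul_ne_zero hh0 hf0), hcompa, zero_add] at h1
      omega
    · simp [Polynomial.rootMultiplicity_eq_zero ha]
  have h1 : f.roots.card = f.natDegree := by
    have := Polynomial.Splits.natDegree_eq_card_roots
      (IsAlgClosed.splits f)
    simpa using this.symm
  have h2 : g.roots.card ≤ g.natDegree := Polynomial.card_roots' g
  have := Multiset.card_le_card hle
  omega
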